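/- Let x, d ∈ ℝ² with x ≠ d, let u ∈ ℝ² be a unit vector linearly independent from d − x, and let ω₂ ∈ (0, π). Set η := ⟨u, d − x⟩/‖d − x‖ and r := ‖d − x‖·(η − (cos ω₂/sin ω₂)·√(1 − η²)). If r > 0, then the point y := x + r·u satisfies: the unoriented angle between y − x and d − y equals ω₂. Conversely, if t > 0 is such that y := x + t·u satisfies that the unoriented angle between y − x and d − y equals ω₂, then t = r. (This is the content of Lemma 1 of the paper: the second scattering point y is uniquely determined by the first scattering point x, the unit direction u of the scattered photon, the detector d and the second scattering angle ω₂.) -/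

import Mathlib

open scoped RealInnerProductSpace

lemma cos_ratio_iff (a b ω : ℝ) (hb : 0 < b) (hω : ω ∈ Set.Ioo 0 Real.pi) :
    a / Real.sqrt (a ^ 2 + b ^ 2) = Real.cos ω ↔ a = b * (Real.cos ω / Real.sin ω) := by
  have hs : 0 < Real.sin ω := Real.sin_pos_of_pos_of_lt_pi hω.1 hω.2
  have hpos : 0 < a ^ 2 + b ^ 2 := by positivity
  have hR : 0 < Real.sqrt (a ^ 2 + b ^ 2) := Real.sqrt_pos.mpr hpos
  constructor
  · intro h
    have hsin : Real.sin ω = b / Real.sqrt (a ^ 2 + b ^ 2) := by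
      have h1 : Real.sin ω = Real.sqrt (1 - Real.cos ω ^ 2) := by
        rw [← Real.sqrt_sq hs.le]; congr 1
        nlinarith [Real.sin_sq_add_cos_sq ω]
      have h2 : 1 - Real.cos ω ^ 2 = b ^ 2 / (a ^ 2 + b ^ 2) := by
        rw [← h, div_pow, Real.sq_sqrt hpos.le]; field_simp; ring
      rw [h1, h2, Real.sqrt_div (sq_nonneg b), Real.sqrt_sq hb.le]
    rw [← h, hsin]
    field_simp
  · intro h
    have hac : a * Real.sin ω = b * Real.cos ω := by rw [h]; field_simp
    have hsq : a ^ 2 + b ^ 2 = (b / Real.sin ω) ^ 2 := by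
      rw [div_pow, eq_div_iff (by positivity)]
      linear_combination (a * Real.sin ω + b * Real.cos ω) * hac + b ^ 2 * Real.sin_sq_add_cos_sq ω
    rw [hsq, Real.sqrt_sq (by positivity)]
    field_simp
    linear_combination hac

theorem second_scattering_point (x d u : EuclideanSpace ℝ (Fin 2)) (hxd : x ≠ d)
    (hu : ‖u‖ = 1) (hind : LinearIndependent ℝ ![u, d - x])
    (ω₂ : ℝ) (hω₂ : ω₂ ∈ Set.Ioo 0 Real.pi) (η r : ℝ)
    (hη : η = ⟪u, d - x⟫ / ‖d - x‖)
    (hr : r = ‖d - x‖ * (η - (Real.cos ω₂ / Real.sin ω₂) * Real.sqrt (1 - η ^ 2))) :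
    (0 < r →
      InnerProductGeometry.angle ((x + r • u) - x) (d - (x + r • u)) = ω₂) ∧
    (∀ t : ℝ, 0 < t →
      InnerProductGeometry.angle ((x + t • u) - x) (d - (x + t • u)) = ω₂ → t = r) := by
  set w : EuclideanSpace ℝ (Fin 2) := d - x with hw_def
  have hw : w ≠ 0 := sub_ne_zero.mpr (Ne.symm hxd)
  have hL : (0:ℝ) < ‖w‖ := norm_pos_iff.mpr hw
  have hind2 : ∀ a : ℝ, a • w ≠ u := by
    intro a
    have := (linearIndependent_fin2.mp hind).2 a
    simpa using this
  have huw : ⟪u, w⟫ = ‖w‖ * η := by rw [hη]; field_simp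
  -- |η| < 1
  have hη1 : η ^ 2 < 1 := by
    have h1 : ⟪u, w⟫ < ‖u‖ * ‖w‖ := by
      rw [inner_lt_norm_mul_iff_real]
      intro hcontra
      rw [hu, one_smul] at hcontra
      exact hind2 ‖w‖⁻¹ (by
        calc ‖w‖⁻¹ • w = ‖w‖⁻¹ • (‖w‖ • u) := by rw [hcontra]
          _ = u := by rw [smul_smul, inv_mul_cancel₀ hL.ne', one_smul])
    have h2 : ⟪u, -w⟫ < ‖u‖ * ‖-w‖ := by
      rw [inner_lt_norm_mul_iff_real]
      intro hcontra
      rw [hu, one_smul, norm_neg] at hcontra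
      exact hind2 (-‖w‖⁻¹) (by
        calc (-‖w‖⁻¹) • w = ‖w‖⁻¹ • (-w) := by rw [neg_smul, ← smul_neg]
          _ = ‖w‖⁻¹ • (‖w‖ • u) := by rw [hcontra]
          _ = u := by rw [smul_smul, inv_mul_cancel₀ hL.ne', one_smul])
    rw [inner_neg_right, norm_neg] at h2
    rw [hu, one_mul, huw] at h1 h2
    have e1 : η < 1 := by
      have h3 : ‖w‖ * η < ‖w‖ * 1 := by linarith
      exact lt_of_mul_lt_mul_left h3 hL.le
    have e2 : -1 < η := by
      have h3 : ‖w‖ * (-1) < ‖w‖ * η := by linarith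
      exact lt_of_mul_lt_mul_left h3 hL.le
    nlinarith
  set s : ℝ := Real.sqrt (1 - η ^ 2) with hs_def
  have hs0 : 0 < s := Real.sqrt_pos.mpr (by linarith)
  have hs2 : s ^ 2 = 1 - η ^ 2 := Real.sq_sqrt (by linarith)
  have key : ∀ t : ℝ, 0 < t →
      (InnerProductGeometry.angle ((x + t • u) - x) (d - (x + t • u)) = ω₂ ↔ t = r) := by
    intro t ht
    have hy1 : (x + t • u) - x = t • u := add_sub_cancel_left x (t • u)
    have hy2 : d - (x + t • u) = w - t • u := by rw [hw_def]; abel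
    rw [hy1, hy2, InnerProductGeometry.angle_smul_left_of_pos _ _ ht]
    -- inner product and norm computations
    have hiu : ⟪u, u⟫ = (1:ℝ) := by
      rw [real_inner_self_eq_norm_sq, hu]; norm_num
    have hinner : ⟪u, w - t • u⟫ = ‖w‖ * η - t := by
      rw [inner_sub_right, real_inner_smul_right, hiu, huw]; ring
    have hnormsq : ‖w - t • u‖ ^ 2 = (‖w‖ * η - t) ^ 2 + (‖w‖ * s) ^ 2 := by
      rw [norm_sub_sq_real, real_inner_smul_right, real_inner_comm u w, huw, norm_smul, hu]
      simp only [Real.norm_eq_abs, abs_of_pos ht, mul_one]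
      nlinarith [hs2]
    have hnorm : ‖w - t • u‖ = Real.sqrt ((‖w‖ * η - t) ^ 2 + (‖w‖ * s) ^ 2) := by
      rw [← hnormsq, Real.sqrt_sq (norm_nonneg _)]
    have hcos : Real.cos (InnerProductGeometry.angle u (w - t • u)) =
        (‖w‖ * η - t) / Real.sqrt ((‖w‖ * η - t) ^ 2 + (‖w‖ * s) ^ 2) := by
      rw [InnerProductGeometry.cos_angle, hinner, hu, one_mul, hnorm]
    have hiff := cos_ratio_iff (‖w‖ * η - t) (‖w‖ * s) ω₂ (by positivity) hω₂
    constructor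
    · intro h
      rw [h] at hcos
      have := hiff.mp hcos.symm
      rw [hr]
      linarith [this]
    · intro h
      have ha : ‖w‖ * η - t = ‖w‖ * s * (Real.cos ω₂ / Real.sin ω₂) := by
        rw [h, hr]; ring
      have := hiff.mpr ha
      refine Real.injOn_cos ⟨InnerProductGeometry.angle_nonneg _ _,
        InnerProductGeometry.angle_le_pi _ _⟩ ⟨hω₂.1.le, hω₂.2.le⟩ ?_
      rw [hcos, this]
  exact ⟨fun hr0 => (key r hr0).mpr rfl, fun t ht h => (key t ht).mp h⟩
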